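/- arXiv:2309.17403 — 3 statements merged into one kernel-verified Lean document; each statement's English description precedes it below -/
import Mathlib

section
/- Let A be a real m×n matrix and fix r < min(m,n). Suppose index sets I, J of size r are chosen so that A_{I,J} has maximal volume (maximal |det|) among all r×r submatrices of A. Then the cross approximation A_r = A_{:,J} A_{I,J}^{-1} A_{I,:} satisfies ‖A − A_r‖_C ≤ (r+1)·σ_{r+1}(A). -/
open Matrix BigOperators Filter

section CrossApproxAux

namespace CrossApprox

variable {N : ℕ}

lemma sum_dot {ι : Type*} (s : Finset ι) (f : ι → Fin N → ℝ) (w : Fin N → ℝ) :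
    (∑ k ∈ s, f k) ⬝ᵥ w = ∑ k ∈ s, f k ⬝ᵥ w := by
  simp only [dotProduct, Finset.sum_apply, Finset.sum_mul]
  exact Finset.sum_comm

lemma dot_sum {ι : Type*} (s : Finset ι) (w : Fin N → ℝ) (f : ι → Fin N → ℝ) :
    w ⬝ᵥ (∑ k ∈ s, f k) = ∑ k ∈ s, w ⬝ᵥ f k := by
  simp only [dotProduct, Finset.sum_apply, Finset.mul_sum]
  exact Finset.sum_comm

lemma mulVec_sum' {ι : Type*} (s : Finset ι) (M : Matrix (Fin N) (Fin N) ℝ)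
    (f : ι → Fin N → ℝ) : M *ᵥ (∑ k ∈ s, f k) = ∑ k ∈ s, M *ᵥ f k := by
  funext i
  rw [Finset.sum_apply]
  exact dot_sum s (M i) f

noncomputable def evec {M : Matrix (Fin N) (Fin N) ℝ} (hM : M.IsHermitian) (k : Fin N) :
    Fin N → ℝ := ⇑(hM.eigenvectorBasis k)

lemma evec_mulVec {M : Matrix (Fin N) (Fin N) ℝ} (hM : M.IsHermitian) (k : Fin N) :
    M *ᵥ evec hM k = hM.eigenvalues k • evec hM k :=
  hM.mulVec_eigenvectorBasis k

lemma evec_dot {M : Matrix (Fin N) (Fin N) ℝ} (hM : M.IsHermitian) (k l : Fin N) :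
    evec hM k ⬝ᵥ evec hM l = if k = l then 1 else 0 := by
  have h : (star (hM.eigenvectorUnitary : Matrix (Fin N) (Fin N) ℝ) *
      (hM.eigenvectorUnitary : Matrix (Fin N) (Fin N) ℝ)) k l
      = (1 : Matrix (Fin N) (Fin N) ℝ) k l := by
    rw [Matrix.mem_unitaryGroup_iff'.mp hM.eigenvectorUnitary.2]
  rw [Matrix.mul_apply, Matrix.one_apply] at h
  simp only [Matrix.star_apply, star_trivial, hM.eigenvectorUnitary_apply] at h
  simpa [dotProduct, evec] using h

lemma evec_expansion {M : Matrix (Fin N) (Fin N) ℝ} (hM : M.IsHermitian) (x : Fin N → ℝ) :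
    x = ∑ k, (evec hM k ⬝ᵥ x) • evec hM k := by
  have h : ((hM.eigenvectorUnitary : Matrix (Fin N) (Fin N) ℝ) *
      star (hM.eigenvectorUnitary : Matrix (Fin N) (Fin N) ℝ)) *ᵥ x = x := by
    rw [Matrix.mem_unitaryGroup_iff.mp hM.eigenvectorUnitary.2, one_mulVec]
  funext i
  have h2 := congrFun h i
  rw [← Matrix.mulVec_mulVec] at h2
  rw [← h2, Matrix.mulVec, dotProduct, Finset.sum_apply]
  refine Finset.sum_congr rfl fun k _ => ?_
  simp only [Pi.smul_apply, smul_eq_mul, evec, Matrix.mulVec, dotProduct,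
    Matrix.star_apply, star_trivial, hM.eigenvectorUnitary_apply]
  ring

lemma quad_eq {M : Matrix (Fin N) (Fin N) ℝ} (hM : M.IsHermitian) (x : Fin N → ℝ) :
    x ⬝ᵥ (M *ᵥ x) = ∑ k, hM.eigenvalues k * (evec hM k ⬝ᵥ x) ^ 2 := by
  conv_lhs => rw [evec_expansion hM x]
  rw [mulVec_sum', dot_sum]
  refine Finset.sum_congr rfl fun k _ => ?_
  rw [Matrix.mulVec_smul, evec_mulVec, dotProduct_smul, dotProduct_smul,
    dotProduct_comm _ (evec hM k)]
  simp only [smul_eq_mul]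
  rw [← evec_expansion hM x]
  ring

lemma normsq_eq {M : Matrix (Fin N) (Fin N) ℝ} (hM : M.IsHermitian) (x : Fin N → ℝ) :
    x ⬝ᵥ x = ∑ k, (evec hM k ⬝ᵥ x) ^ 2 := by
  conv_lhs => rw [evec_expansion hM x]
  rw [sum_dot]
  refine Finset.sum_congr rfl fun k _ => ?_
  rw [smul_dotProduct, smul_eq_mul, ← evec_expansion hM x,
    dotProduct_comm (evec hM k) x, sq]

lemma rayleigh_lower {M : Matrix (Fin N) (Fin N) ℝ} (hM : M.IsHermitian) (μ : ℝ)
    (hμ : ∀ k, μ ≤ hM.eigenvalues k) (x : Fin N → ℝ) :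
    μ * (x ⬝ᵥ x) ≤ x ⬝ᵥ (M *ᵥ x) := by
  rw [quad_eq hM x, normsq_eq hM x, Finset.mul_sum]
  exact Finset.sum_le_sum fun k _ => mul_le_mul_of_nonneg_right (hμ k) (sq_nonneg _)

lemma evec_linearIndependent {M : Matrix (Fin N) (Fin N) ℝ} (hM : M.IsHermitian) :
    LinearIndependent ℝ (evec hM) := by
  rw [Fintype.linearIndependent_iff]
  intro g hg l
  have h := congrArg (fun w => evec hM l ⬝ᵥ w) hg
  rw [dot_sum] at h
  simp only [dotProduct_smul, evec_dot, smul_eq_mul, mul_ite, mul_one, mul_zero] at h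
  rw [Finset.sum_ite_eq Finset.univ l g] at h
  simpa [dotProduct] using h

lemma dot_eq_zero_of_mem_span {n : ℕ} {ι : Type*} {v : ι → Fin n → ℝ} {z : Fin n → ℝ}
    (hz : ∀ u, z ⬝ᵥ v u = 0) {x : Fin n → ℝ}
    (hx : x ∈ Submodule.span ℝ (Set.range v)) : z ⬝ᵥ x = 0 := by
  induction hx using Submodule.span_induction with
  | mem w hw => obtain ⟨u, rfl⟩ := hw; exact hz u
  | zero => simp [dotProduct]
  | add a b _ _ ha hb => rw [dotProduct_add, ha, hb, add_zero]
  | smul c a _ ha => rw [dotProduct_smul, ha, smul_zero]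

lemma key_interlace {m n r : ℕ} (hrn : r < n) (A : Matrix (Fin m) (Fin n) ℝ)
    (J₁ : Fin (r + 1) → Fin n) (hJ₁ : Function.Injective J₁) (μ : ℝ)
    (hμ : ∀ y : Fin (r + 1) → ℝ, μ * (y ⬝ᵥ y) ≤ ∑ i, ((A.submatrix id J₁ *ᵥ y) i) ^ 2) :
    μ ≤ (Matrix.isHermitian_conjTranspose_mul_self A).eigenvalues
      (Tuple.sort (Matrix.isHermitian_conjTranspose_mul_self A).eigenvalues (Fin.rev ⟨r, hrn⟩)) := by
  classical
  set hM := Matrix.isHermitian_conjTranspose_mul_self A with hMdef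
  set σ := Tuple.sort hM.eigenvalues with hσ
  set p : Fin n := Fin.rev ⟨r, hrn⟩ with hp
  have hpval : (p : ℕ) = n - (r + 1) := by simp [hp, Fin.val_rev]
  set lam := hM.eigenvalues with hlam
  have hle : n - r ≤ n := Nat.sub_le n r
  -- the two subspaces
  set V : Submodule ℝ (Fin n → ℝ) :=
    Submodule.span ℝ (Set.range fun u : Fin (r + 1) => (Pi.single (J₁ u) 1 : Fin n → ℝ)) with hV
  set W : Submodule ℝ (Fin n → ℝ) :=
    Submodule.span ℝ (Set.range fun q : Fin (n - r) => evec hM (σ (Fin.castLE hle q))) with hW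
  -- dimensions
  have hVrank : Module.finrank ℝ V = r + 1 := by
    rw [hV, finrank_span_eq_card ?_]
    · simp
    · have h1 := (Pi.basisFun ℝ (Fin n)).linearIndependent.comp J₁ hJ₁
      convert h1 using 1
      funext u
      simp [Function.comp]
  have hWrank : Module.finrank ℝ W = n - r := by
    rw [hW, finrank_span_eq_card ?_]
    · simp
    · exact (evec_linearIndependent hM).comp _
        (fun a b hab => (Fin.castLE_injective hle) (σ.injective hab))
  -- nontrivial intersection
  have hsum := Submodule.finrank_sup_add_finrank_inf_eq V W
  have hsup : Module.finrank ℝ ↥(V ⊔ W) ≤ n := by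
    have h := Submodule.finrank_le (V ⊔ W)
    rwa [Module.finrank_fintype_fun_eq_card, Fintype.card_fin] at h
  have hinf : 0 < Module.finrank ℝ ↥(V ⊓ W) := by
    rw [hVrank, hWrank] at hsum
    omega
  have hbot : V ⊓ W ≠ ⊥ := by
    intro hb
    rw [hb, finrank_bot] at hinf
    exact lt_irrefl 0 hinf
  obtain ⟨x, hxVW, hx0⟩ := Submodule.exists_mem_ne_zero_of_ne_bot hbot
  have hxV : x ∈ V := hxVW.1
  have hxW : x ∈ W := hxVW.2
  -- support of x
  have hsupp : ∀ j' : Fin n, j' ∉ Set.range J₁ → x j' = 0 := by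
    intro j' hj'
    have := dot_eq_zero_of_mem_span (z := (Pi.single j' 1 : Fin n → ℝ)) ?_ hxV
    · rwa [single_dotProduct, one_mul] at this
    · intro u
      rw [single_dotProduct, one_mul, Pi.single_apply, if_neg]
      intro he
      exact hj' ⟨u, he.symm⟩
  -- eigencoordinates of x
  have hcoord : ∀ k : Fin n, (∀ q : Fin (n - r), σ (Fin.castLE hle q) ≠ k) →
      evec hM k ⬝ᵥ x = 0 := by
    intro k hk
    refine dot_eq_zero_of_mem_span (z := evec hM k) ?_ hxW
    intro q
    rw [evec_dot, if_neg]
    exact fun he => hk q he.symm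
  -- restrict x to the columns J₁
  set y : Fin (r + 1) → ℝ := fun u => x (J₁ u) with hy
  have himage : ∀ f : Fin n → ℝ, (∀ j', j' ∉ Set.range J₁ → f j' = 0) →
      ∑ j', f j' = ∑ u, f (J₁ u) := by
    intro f hf
    have himg : ∑ j' ∈ Finset.univ.image J₁, f j' = ∑ u, f (J₁ u) :=
      Finset.sum_image (fun a _ b _ h => hJ₁ h)
    rw [← himg]
    refine (Finset.sum_subset (Finset.subset_univ _) ?_).symm
    intro j' _ hj'
    refine hf j' fun hr => ?_
    obtain ⟨u, hu⟩ := hr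
    exact hj' (Finset.mem_image.mpr ⟨u, Finset.mem_univ u, hu⟩)
  have hCy : ∀ i, (A.submatrix id J₁ *ᵥ y) i = (A *ᵥ x) i := by
    intro i
    show (A.submatrix id J₁ i) ⬝ᵥ y = (A i) ⬝ᵥ x
    rw [dotProduct, dotProduct,
      himage (fun j' => A i j' * x j') (fun j' hj' => by simp [hsupp j' hj'])]
    rfl
  have hyy : y ⬝ᵥ y = x ⬝ᵥ x := by
    rw [dotProduct, dotProduct,
      himage (fun j' => x j' * x j') (fun j' hj' => by simp [hsupp j' hj'])]
  have hAH : Aᴴ = Aᵀ := by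
    ext i j
    simp [Matrix.conjTranspose_apply]
  have h1 : μ * (x ⬝ᵥ x) ≤ x ⬝ᵥ ((Aᴴ * A) *ᵥ x) := by
    have h2 := hμ y
    rw [hyy] at h2
    refine h2.trans (le_of_eq ?_)
    calc ∑ i, ((A.submatrix id J₁ *ᵥ y) i) ^ 2
        = ∑ i, ((A *ᵥ x) i) ^ 2 := by simp_rw [hCy]
      _ = (A *ᵥ x) ⬝ᵥ (A *ᵥ x) := by simp [dotProduct, sq]
      _ = x ⬝ᵥ ((Aᴴ * A) *ᵥ x) := by
          rw [← Matrix.mulVec_mulVec, Matrix.dotProduct_mulVec x, hAH,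
            Matrix.vecMul_transpose]
  have h3 : x ⬝ᵥ ((Aᴴ * A) *ᵥ x) ≤ lam (σ p) * (x ⬝ᵥ x) := by
    rw [quad_eq hM x, normsq_eq hM x, Finset.mul_sum]
    refine Finset.sum_le_sum fun k _ => ?_
    by_cases hk : ∃ q : Fin (n - r), σ (Fin.castLE hle q) = k
    · obtain ⟨q, rfl⟩ := hk
      refine mul_le_mul_of_nonneg_right ?_ (sq_nonneg _)
      have hmono := Tuple.monotone_sort hM.eigenvalues
        (show Fin.castLE hle q ≤ p by rw [Fin.le_def, hpval, Fin.coe_castLE]; have := q.2; omega)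
      exact hmono
    · push_neg at hk
      rw [hcoord k hk]
      simp
  have hxx : 0 < x ⬝ᵥ x := by
    rcases lt_or_eq_of_le (Finset.sum_nonneg fun i _ => mul_self_nonneg (x i) :
      (0:ℝ) ≤ x ⬝ᵥ x) with h | h
    · exact h
    · exact absurd (dotProduct_self_eq_zero.mp h.symm) hx0
  have := (h1.trans h3)
  exact (mul_le_mul_iff_left₀ hxx).mp this

lemma mulVec_sq_le {N : ℕ} (M : Matrix (Fin N) (Fin N) ℝ) (v : Fin N → ℝ) :
    ∑ k, ((M *ᵥ v) k) ^ 2 ≤ (∑ k, ∑ l, (M k l) ^ 2) * ∑ l, (v l) ^ 2 := by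
  rw [Finset.sum_mul]
  refine Finset.sum_le_sum fun k _ => ?_
  exact Finset.sum_mul_sq_le_sq_mul_sq Finset.univ (fun l => M k l) v

lemma one_le_fro {N : ℕ} (B : Matrix (Fin N) (Fin N) ℝ) (hdet : IsUnit B.det)
    (x : Fin N → ℝ) (μ : ℝ) (hx1 : x ⬝ᵥ x = 1) (heq : (Bᴴ * B) *ᵥ x = μ • x) :
    1 ≤ (∑ k, ∑ l, (B⁻¹ k l) ^ 2) * μ := by
  have hBH : Bᴴ = Bᵀ := by ext i j; simp [Matrix.conjTranspose_apply]
  have hμval : ∑ i, ((B *ᵥ x) i) ^ 2 = μ := by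
    have h1 : ∑ i, ((B *ᵥ x) i) ^ 2 = x ⬝ᵥ ((Bᴴ * B) *ᵥ x) := by
      rw [← Matrix.mulVec_mulVec, Matrix.dotProduct_mulVec x, hBH, Matrix.vecMul_transpose]
      simp [dotProduct, sq]
    rw [h1, heq, dotProduct_smul, smul_eq_mul, hx1, mul_one]
  have hxrec : B⁻¹ *ᵥ (B *ᵥ x) = x := by
    rw [Matrix.mulVec_mulVec, Matrix.nonsing_inv_mul B hdet, Matrix.one_mulVec]
  have h2 : (1:ℝ) = ∑ i, ((B⁻¹ *ᵥ (B *ᵥ x)) i) ^ 2 := by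
    rw [hxrec, ← hx1]
    simp [dotProduct, sq]
  rw [h2, ← hμval]
  exact mulVec_sq_le B⁻¹ (B *ᵥ x)

lemma adjugate_abs_le {N : ℕ} (B : Matrix (Fin (N + 1)) (Fin (N + 1)) ℝ) (d : ℝ)
    (hminor : ∀ f g : Fin N → Fin (N + 1), Function.Injective f → Function.Injective g →
      |(B.submatrix f g).det| ≤ d) : ∀ u v, |B.adjugate u v| ≤ d := by
  intro u v
  rw [Matrix.adjugate_apply]
  set Nm := B.updateRow v (Pi.single u 1) with hNm
  have hrow : ∀ j, Nm v j = if j = u then 1 else 0 := by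
    intro j
    simp [hNm, Matrix.updateRow_self, Pi.single_apply]
  have hsub : Nm.submatrix v.succAbove u.succAbove = B.submatrix v.succAbove u.succAbove := by
    ext a b
    simp [hNm, Matrix.submatrix_apply, Matrix.updateRow_apply, Fin.succAbove_ne v a]
  rw [Matrix.det_succ_row Nm v]
  have hsum : (∑ j : Fin (N + 1), (-1 : ℝ) ^ ((v : ℕ) + (j : ℕ)) * Nm v j *
      (Nm.submatrix v.succAbove j.succAbove).det)
      = (-1 : ℝ) ^ ((v : ℕ) + (u : ℕ)) * (Nm.submatrix v.succAbove u.succAbove).det := by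
    rw [Finset.sum_eq_single u]
    · rw [hrow u, if_pos rfl, mul_one]
    · intro j _ hj
      rw [hrow j, if_neg hj, mul_zero, zero_mul]
    · exact fun h => absurd (Finset.mem_univ u) h
  rw [hsum, hsub, abs_mul, abs_pow, abs_neg, abs_one, one_pow, one_mul]
  exact hminor _ _ (Fin.succAbove_right_injective) (Fin.succAbove_right_injective)

lemma quad_self {m N : ℕ} (B : Matrix (Fin m) (Fin N) ℝ) (y : Fin N → ℝ) :
    y ⬝ᵥ ((Bᴴ * B) *ᵥ y) = ∑ i, ((B *ᵥ y) i) ^ 2 := by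
  have hBH : Bᴴ = Bᵀ := by ext i j; simp [Matrix.conjTranspose_apply]
  rw [← Matrix.mulVec_mulVec, Matrix.dotProduct_mulVec y, hBH, Matrix.vecMul_transpose]
  simp [dotProduct, sq]

lemma snoc_injective {r m : ℕ} {I : Fin r → Fin m} {i : Fin m} (hI : Function.Injective I)
    (hi : i ∉ Set.range I) : Function.Injective (Fin.snoc I i : Fin (r + 1) → Fin m) := by
  intro a b
  induction a using Fin.lastCases with
  | last =>
    induction b using Fin.lastCases with
    | last => intro _; rfl
    | cast b =>
      rw [Fin.snoc_last, Fin.snoc_castSucc]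
      exact fun h => absurd ⟨b, h.symm⟩ hi
  | cast a =>
    induction b using Fin.lastCases with
    | last =>
      rw [Fin.snoc_last, Fin.snoc_castSucc]
      exact fun h => absurd ⟨a, h⟩ hi
    | cast b =>
      rw [Fin.snoc_castSucc, Fin.snoc_castSucc]
      exact fun h => congrArg Fin.castSucc (hI h)

lemma det_snoc_eq {m n r : ℕ} (A : Matrix (Fin m) (Fin n) ℝ) (I : Fin r → Fin m)
    (J : Fin r → Fin n) (hinv : IsUnit (A.submatrix I J)) (i : Fin m) (j : Fin n) :
    (A.submatrix (Fin.snoc I i) (Fin.snoc J j)).det = (A.submatrix I J).det *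
      ((A - A.submatrix id J * (A.submatrix I J)⁻¹ * A.submatrix I id) i j) := by
  letI := hinv.invertible
  have h1 : (A.submatrix (Fin.snoc I i) (Fin.snoc J j)).submatrix finSumFinEquiv finSumFinEquiv
      = Matrix.fromBlocks (A.submatrix I J) (A.submatrix I fun _ : Fin 1 => j)
        (A.submatrix (fun _ : Fin 1 => i) J) (A.submatrix (fun _ : Fin 1 => i) fun _ : Fin 1 => j) := by
    ext u v
    rcases u with u | u <;> rcases v with v | v <;>
      simp [Matrix.submatrix_apply, finSumFinEquiv_apply_left, finSumFinEquiv_apply_right,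
        Matrix.fromBlocks, Fin.castAdd, Fin.natAdd, Fin.snoc, Fin.castLT]
  have h2 := Matrix.det_submatrix_equiv_self finSumFinEquiv
    (A.submatrix (Fin.snoc I i) (Fin.snoc J j))
  rw [h1] at h2
  rw [← h2, Matrix.det_fromBlocks₁₁, Matrix.invOf_eq_nonsing_inv, Matrix.det_fin_one]
  congr 1

lemma resid_row {m n r : ℕ} (A : Matrix (Fin m) (Fin n) ℝ) (I : Fin r → Fin m)
    (J : Fin r → Fin n) (hdet : IsUnit (A.submatrix I J).det) (k : Fin r) (j' : Fin n) :
    (A - A.submatrix id J * (A.submatrix I J)⁻¹ * A.submatrix I id) (I k) j' = 0 := by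
  have hX : ∀ l, (A.submatrix id J * (A.submatrix I J)⁻¹) (I k) l
      = (1 : Matrix (Fin r) (Fin r) ℝ) k l := by
    intro l
    have h := congrFun (congrFun (Matrix.mul_nonsing_inv _ hdet) k) l
    rw [← h, Matrix.mul_apply, Matrix.mul_apply]
    rfl
  rw [Matrix.sub_apply, Matrix.mul_apply]
  simp_rw [hX]
  simp [Matrix.one_apply, Finset.sum_ite_eq]

lemma resid_col {m n r : ℕ} (A : Matrix (Fin m) (Fin n) ℝ) (I : Fin r → Fin m)
    (J : Fin r → Fin n) (hdet : IsUnit (A.submatrix I J).det) (i' : Fin m) (l : Fin r) :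
    (A - A.submatrix id J * (A.submatrix I J)⁻¹ * A.submatrix I id) i' (J l) = 0 := by
  have hY : ∀ t, ((A.submatrix I J)⁻¹ * A.submatrix I id) t (J l)
      = (1 : Matrix (Fin r) (Fin r) ℝ) t l := by
    intro t
    have h := congrFun (congrFun (Matrix.nonsing_inv_mul _ hdet) t) l
    rw [← h, Matrix.mul_apply, Matrix.mul_apply]
    rfl
  rw [Matrix.sub_apply, Matrix.mul_assoc, Matrix.mul_apply]
  simp_rw [hY]
  simp [Matrix.one_apply, Finset.sum_ite_eq]

end CrossApprox

end CrossApproxAux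

noncomputable def sval {m n : ℕ} (A : Matrix (Fin m) (Fin n) ℝ) (k : Fin n) : ℝ :=
  Real.sqrt ((Matrix.isHermitian_conjTranspose_mul_self A).eigenvalues
    (Tuple.sort (Matrix.isHermitian_conjTranspose_mul_self A).eigenvalues (Fin.rev k)))

noncomputable def chebNorm {m n : ℕ} (A : Matrix (Fin m) (Fin n) ℝ) : ℝ :=
  ⨆ i, ⨆ j, |A i j|

noncomputable def frobNorm {m n : ℕ} (A : Matrix (Fin m) (Fin n) ℝ) : ℝ :=
  Real.sqrt (∑ i, ∑ j, (A i j) ^ 2)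

theorem stmt9 {m n r : ℕ} (hrm : r < m) (hrn : r < n)
    (A : Matrix (Fin m) (Fin n) ℝ) (I : Fin r → Fin m) (J : Fin r → Fin n)
    (hI : Function.Injective I) (hJ : Function.Injective J)
    (hinv : IsUnit (A.submatrix I J))
    (hmax : ∀ (I' : Fin r → Fin m) (J' : Fin r → Fin n),
      Function.Injective I' → Function.Injective J' →
        |(A.submatrix I' J').det| ≤ |(A.submatrix I J).det|) :
    chebNorm (A - A.submatrix id J * (A.submatrix I J)⁻¹ * A.submatrix I id)
      ≤ (r + 1) * sval A ⟨r, hrn⟩ := by 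
  classical
  have hdetIJ : IsUnit (A.submatrix I J).det := (Matrix.isUnit_iff_isUnit_det _).mp hinv
  set E := A - A.submatrix id J * (A.submatrix I J)⁻¹ * A.submatrix I id with hE
  have hs0 : (0:ℝ) ≤ sval A ⟨r, hrn⟩ := Real.sqrt_nonneg _
  have hrs0 : (0:ℝ) ≤ ((r:ℝ) + 1) * sval A ⟨r, hrn⟩ := by positivity
  have hentry : ∀ i j, |E i j| ≤ ((r:ℝ) + 1) * sval A ⟨r, hrn⟩ := by
    intro i j
    by_cases hiI : i ∈ Set.range I
    · obtain ⟨k, rfl⟩ := hiI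
      rw [hE, CrossApprox.resid_row A I J hdetIJ k j, abs_zero]
      exact hrs0
    by_cases hjJ : j ∈ Set.range J
    · obtain ⟨l, rfl⟩ := hjJ
      rw [hE, CrossApprox.resid_col A I J hdetIJ i l, abs_zero]
      exact hrs0
    by_cases hEij : E i j = 0
    · rw [hEij, abs_zero]
      exact hrs0
    set Ih : Fin (r+1) → Fin m := Fin.snoc I i with hIhd
    set J₁ : Fin (r+1) → Fin n := Fin.snoc J j with hJ₁d
    have hIhinj : Function.Injective Ih := CrossApprox.snoc_injective hI hiI
    have hJ₁inj : Function.Injective J₁ := CrossApprox.snoc_injective hJ hjJ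
    set B := A.submatrix Ih J₁ with hB'
    set d := |(A.submatrix I J).det| with hd'
    have hd : 0 < d := abs_pos.mpr hdetIJ.ne_zero
    have hdetB : B.det = (A.submatrix I J).det * E i j := CrossApprox.det_snoc_eq A I J hinv i j
    have hdetBne : B.det ≠ 0 := by
      rw [hdetB]; exact mul_ne_zero hdetIJ.ne_zero hEij
    have hBdet : IsUnit B.det := isUnit_iff_ne_zero.mpr hdetBne
    have habsB : |B.det| = d * |E i j| := by rw [hdetB, abs_mul, hd']
    have hminor : ∀ f g : Fin r → Fin (r+1), Function.Injective f → Function.Injective g →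
        |(B.submatrix f g).det| ≤ d := by
      intro f g hf hg
      rw [hB', Matrix.submatrix_submatrix]
      exact hmax _ _ (hIhinj.comp hf) (hJ₁inj.comp hg)
    have hadj := CrossApprox.adjugate_abs_le B d hminor
    have hBinv : ∀ k l, |B⁻¹ k l| ≤ d / |B.det| := by
      intro k l
      have hent : B⁻¹ k l = (B.det)⁻¹ * B.adjugate k l := by
        rw [Matrix.inv_def, Matrix.smul_apply, smul_eq_mul, Ring.inverse_eq_inv']
      rw [hent, abs_mul, abs_inv, div_eq_mul_inv, mul_comm d]
      exact mul_le_mul_of_nonneg_left (hadj k l) (inv_nonneg.mpr (abs_nonneg _))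
    set hBh := Matrix.isHermitian_conjTranspose_mul_self B with hBhdef
    obtain ⟨k₀, -, hk₀⟩ := Finset.exists_min_image Finset.univ hBh.eigenvalues
      Finset.univ_nonempty
    set μ := hBh.eigenvalues k₀ with hμdef
    have hmin : ∀ k, μ ≤ hBh.eigenvalues k := fun k => hk₀ k (Finset.mem_univ k)
    set x := CrossApprox.evec hBh k₀ with hx'
    have hx1 : x ⬝ᵥ x = 1 := by
      rw [hx', CrossApprox.evec_dot hBh k₀ k₀, if_pos rfl]
    have heq : (Bᴴ * B) *ᵥ x = μ • x := CrossApprox.evec_mulVec hBh k₀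
    set F := ∑ k, ∑ l, (B⁻¹ k l)^2 with hF'
    have h1F : (1:ℝ) ≤ F * μ := CrossApprox.one_le_fro B hBdet x μ hx1 heq
    have hF0 : (0:ℝ) ≤ F :=
      Finset.sum_nonneg fun k _ => Finset.sum_nonneg fun l _ => sq_nonneg _
    have hμ0 : (0:ℝ) ≤ μ := by nlinarith
    have hinterlace := CrossApprox.key_interlace hrn A J₁ hJ₁inj μ ?_
    swap
    · intro y
      have hr := CrossApprox.rayleigh_lower hBh μ hmin y
      rw [CrossApprox.quad_self B y] at hr
      refine hr.trans ?_
      have hrow : ∀ k, (B *ᵥ y) k = ((A.submatrix id J₁) *ᵥ y) (Ih k) := fun k => rfl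
      calc ∑ k, ((B *ᵥ y) k)^2
          = ∑ k, (((A.submatrix id J₁) *ᵥ y) (Ih k))^2 := by simp_rw [hrow]
        _ = ∑ i' ∈ Finset.univ.image Ih, (((A.submatrix id J₁) *ᵥ y) i')^2 :=
            (Finset.sum_image (f := fun i' => ((A.submatrix id J₁ *ᵥ y) i')^2)
              (fun a _ b _ h => hIhinj h)).symm
        _ ≤ ∑ i', (((A.submatrix id J₁) *ᵥ y) i')^2 :=
            Finset.sum_le_sum_of_subset_of_nonneg (Finset.subset_univ _)
              (fun i' _ _ => sq_nonneg _)
    have hsqrt : Real.sqrt μ ≤ sval A ⟨r, hrn⟩ := Real.sqrt_le_sqrt hinterlace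
    have hEpos : 0 < |E i j| := abs_pos.mpr hEij
    have hEabs : |E i j| ≠ 0 := ne_of_gt hEpos
    have hFle : F ≤ ((r:ℝ)+1)^2 * (d / |B.det|)^2 := by
      have hsq : ∀ k l : Fin (r+1), (B⁻¹ k l)^2 ≤ (d / |B.det|)^2 := fun k l => by
        rw [← sq_abs]
        exact pow_le_pow_left₀ (abs_nonneg _) (hBinv k l) 2
      calc F ≤ ∑ _k : Fin (r+1), ∑ _l : Fin (r+1), (d / |B.det|)^2 :=
            Finset.sum_le_sum (fun k _ => Finset.sum_le_sum fun l _ => hsq k l)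
        _ = ((r:ℝ)+1)^2 * (d/|B.det|)^2 := by
            simp [Finset.sum_const, Finset.card_univ]
            ring
    have h2 : (1:ℝ) ≤ ((r:ℝ)+1)^2 * (1 / |E i j|^2) * μ := by
      refine le_trans h1F ?_
      refine (mul_le_mul_of_nonneg_right hFle hμ0).trans_eq ?_
      rw [habsB]
      rw [div_mul_eq_div_div, div_self (ne_of_gt hd)]
      ring_nf
    have h3 : |E i j|^2 ≤ ((r:ℝ)+1)^2 * μ := by
      have h := mul_le_mul_of_nonneg_right h2 (sq_nonneg (|E i j|))
      rw [one_mul] at h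
      refine h.trans_eq ?_
      field_simp
    have h4 : |E i j| ≤ ((r:ℝ)+1) * Real.sqrt μ := by
      have h5 := Real.sqrt_le_sqrt h3
      rw [Real.sqrt_sq (abs_nonneg _), Real.sqrt_mul (by positivity) μ,
        Real.sqrt_sq (by positivity)] at h5
      exact h5
    calc |E i j| ≤ ((r:ℝ)+1) * Real.sqrt μ := h4
      _ ≤ ((r:ℝ)+1) * sval A ⟨r,hrn⟩ := by
          exact mul_le_mul_of_nonneg_left hsqrt (by positivity)
  have hne : Nonempty (Fin m) := ⟨⟨0, Nat.lt_of_le_of_lt (Nat.zero_le r) hrm⟩⟩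
  have hne' : Nonempty (Fin n) := ⟨⟨0, Nat.lt_of_le_of_lt (Nat.zero_le r) hrn⟩⟩
  exact ciSup_le fun i => ciSup_le fun j => hentry i j
end

section
/- Suppose I, J of size r are such that det(A_{I,J}) = ν·det(A_◇) with ν ∈ (0,1), where A_◇ is a maximal-volume r×r submatrix of A. Then ‖A − A_{:,J} A_{I,J}^{-1} A_{I,:}‖_C ≤ (1/ν)·(r+1)·σ_{r+1}(A). -/
open Matrix BigOperators Filter

lemma sum_mul_ind {n k : ℕ} (J' : Fin k → Fin n) (f : Fin n → ℝ) (c : Fin k → ℝ) :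
    ∑ jj, f jj * (∑ t, if jj = J' t then c t else 0) = ∑ t, f (J' t) * c t := by
  have : ∀ jj, f jj * (∑ t, if jj = J' t then c t else 0)
      = ∑ t, if jj = J' t then f jj * c t else 0 := by
    intro jj; rw [Finset.mul_sum]; congr 1; ext t; split <;> simp_all
  simp_rw [this]
  rw [Finset.sum_comm]
  congr 1; ext t
  simp only [Finset.sum_ite_eq', Finset.mem_univ, if_true]

lemma abs_adjugate_eq {r : ℕ} (B : Matrix (Fin (r+1)) (Fin (r+1)) ℝ) (i j : Fin (r+1)) :
    |B.adjugate i j| = |(B.submatrix j.succAbove i.succAbove).det| := by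
  rw [Matrix.adjugate_apply]
  have h1 : (B.updateRow j (Pi.single i 1)).det
      = ∑ k, (-1 : ℝ)^(j.1+k.1) * (if k = i then 1 else 0)
        * ((B.updateRow j (Pi.single i 1)).submatrix j.succAbove k.succAbove).det := by
    rw [Matrix.det_succ_row _ j]
    congr 1; ext k
    rw [Matrix.updateRow_self, Pi.single_apply]
  have h2 : ∀ k : Fin (r+1),
      (B.updateRow j (Pi.single i 1)).submatrix j.succAbove k.succAbove
        = B.submatrix j.succAbove k.succAbove := by
    intro k; ext a b
    simp [Matrix.updateRow_ne (Fin.succAbove_ne j a)]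
  simp_rw [h2] at h1
  rw [h1, Finset.sum_eq_single i]
  · rw [if_pos rfl, mul_one, abs_mul, abs_pow, abs_neg, abs_one, one_pow, one_mul]
  · intro b _ hb; rw [if_neg hb, mul_zero, zero_mul]
  · simp

lemma det_le_of_vec {r : ℕ} (B : Matrix (Fin (r+1)) (Fin (r+1)) ℝ) (K s : ℝ)
    (hK : 0 ≤ K) (hs : 0 ≤ s)
    (hadj : ∀ i j, |B.adjugate i j| ≤ K)
    (hc : ∃ c : Fin (r+1) → ℝ, c ≠ 0 ∧
      ∑ i, ((B *ᵥ c) i)^2 ≤ s^2 * ∑ t, (c t)^2) :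
    |B.det| ≤ (r+1) * K * s := by
  obtain ⟨c, hc0, hcs⟩ := hc
  set w := B *ᵥ c with hw
  set S := ∑ t, (c t)^2 with hS
  have hS0 : 0 < S := by
    obtain ⟨t, ht⟩ := Function.ne_iff.mp hc0
    have : (0:ℝ) < (c t)^2 := (sq_nonneg _).lt_of_ne (by simpa using (pow_ne_zero 2 ht).symm)
    refine lt_of_lt_of_le this ?_
    exact Finset.single_le_sum (fun i _ => sq_nonneg (c i)) (Finset.mem_univ t)
  have hkey : B.adjugate *ᵥ w = B.det • c := by
    rw [hw, Matrix.mulVec_mulVec, Matrix.adjugate_mul, Matrix.smul_mulVec,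
      Matrix.one_mulVec]
  have hTw : 0 ≤ ∑ i, (w i)^2 := Finset.sum_nonneg fun i _ => sq_nonneg _
  have hCS : ∀ i, ((B.adjugate *ᵥ w) i)^2 ≤ ((r+1) * K^2) * ∑ jj, (w jj)^2 := by
    intro i
    have hmv : (B.adjugate *ᵥ w) i = ∑ jj, B.adjugate i jj * w jj := rfl
    have h1 : ((B.adjugate *ᵥ w) i)^2 ≤ (∑ jj, (B.adjugate i jj)^2) * ∑ jj, (w jj)^2 := by
      rw [hmv]; exact Finset.sum_mul_sq_le_sq_mul_sq _ _ _
    refine h1.trans (mul_le_mul_of_nonneg_right ?_ hTw)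
    calc ∑ jj, (B.adjugate i jj)^2 ≤ ∑ _jj : Fin (r+1), K^2 := by
          refine Finset.sum_le_sum fun jj _ => ?_
          rw [← sq_abs]
          exact pow_le_pow_left₀ (abs_nonneg _) (hadj i jj) 2
      _ = (r+1) * K^2 := by simp [mul_comm]
  have hmain : B.det^2 * S ≤ ((r+1) * K * s)^2 * S := by
    have h2 : ∑ i, ((B.adjugate *ᵥ w) i)^2 ≤ (r+1) * ((r+1) * K^2) * ∑ jj, (w jj)^2 := by
      calc ∑ i, ((B.adjugate *ᵥ w) i)^2 ≤ ∑ _i : Fin (r+1), ((r+1) * K^2) * ∑ jj, (w jj)^2 :=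
            Finset.sum_le_sum fun i _ => hCS i
        _ = (r+1) * ((r+1) * K^2) * ∑ jj, (w jj)^2 := by
            rw [Finset.sum_const]; simp [mul_assoc]
    have h3 : ∑ i, ((B.adjugate *ᵥ w) i)^2 = B.det^2 * S := by
      rw [hkey, hS, Finset.mul_sum]
      congr 1; ext i; simp [Pi.smul_apply, smul_eq_mul]; ring
    rw [h3] at h2
    calc B.det^2 * S ≤ (r+1) * ((r+1) * K^2) * ∑ jj, (w jj)^2 := h2
      _ ≤ (r+1) * ((r+1) * K^2) * (s^2 * S) := by
          refine mul_le_mul_of_nonneg_left hcs (by positivity)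
      _ = ((r+1) * K * s)^2 * S := by ring
  have h4 : B.det^2 ≤ ((r+1) * K * s)^2 := le_of_mul_le_mul_right hmain hS0
  calc |B.det| = Real.sqrt (B.det^2) := (Real.sqrt_sq_eq_abs _).symm
    _ ≤ Real.sqrt (((r+1) * K * s)^2) := Real.sqrt_le_sqrt h4
    _ = (r+1) * K * s := Real.sqrt_sq (by positivity)

lemma exists_kernel_vec {m n r : ℕ} (hrn : r < n) (A : Matrix (Fin m) (Fin n) ℝ)
    (I'' : Fin (r+1) → Fin m) (J'' : Fin (r+1) → Fin n)
    (hI'' : Function.Injective I'') (hJ'' : Function.Injective J'') :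
    ∃ c : Fin (r+1) → ℝ, c ≠ 0 ∧
      ∑ i, ((A.submatrix I'' J'' *ᵥ c) i)^2 ≤ (sval A ⟨r, hrn⟩)^2 * ∑ t, (c t)^2 := by
  classical
  set hH := Matrix.isHermitian_conjTranspose_mul_self A with hHdef
  set μ : Fin n → ℝ := hH.eigenvalues with hμ
  set σ : Equiv.Perm (Fin n) := Tuple.sort μ with hσ
  set p : Fin n := Fin.rev ⟨r, hrn⟩ with hp
  have hpval : (p : ℕ) + 1 + r = n := by
    have : (p : ℕ) = n - (r + 1) := by simp [hp, Fin.val_rev]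
    omega
  set lam : ℝ := μ (σ p) with hlam
  have hlam0 : 0 ≤ lam := Matrix.eigenvalues_conjTranspose_mul_self_nonneg A (σ p)
  have hsval : (sval A ⟨r, hrn⟩)^2 = lam := Real.sq_sqrt hlam0
  set V : Matrix (Fin n) (Fin n) ℝ := (hH.eigenvectorUnitary : Matrix (Fin n) (Fin n) ℝ) with hV
  have hVV : V * star V = 1 := Matrix.mem_unitaryGroup_iff.mp hH.eigenvectorUnitary.2
  set pos : Fin r → Fin n := fun k => ⟨(p : ℕ) + 1 + (k : ℕ), by omega⟩ with hpos
  set W : Matrix (Fin r) (Fin (r+1)) ℝ :=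
    Matrix.of (fun (k : Fin r) (t : Fin (r+1)) => (star V) (σ (pos k)) (J'' t)) with hW
  have hnotinj : ¬ Function.Injective W.mulVecLin := by
    intro h
    have h1 := LinearMap.finrank_le_finrank_of_injective h
    rw [Module.finrank_fintype_fun_eq_card, Module.finrank_fintype_fun_eq_card] at h1
    simp at h1
  obtain ⟨a, b, hab, hne⟩ := Function.not_injective_iff.mp hnotinj
  refine ⟨a - b, sub_ne_zero.mpr hne, ?_⟩
  set c := a - b with hc
  have hker : W *ᵥ c = 0 := by
    have := map_sub W.mulVecLin a b
    rw [hab] at this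
    simpa [Matrix.mulVecLin_apply, hc] using this
  set x : Fin n → ℝ := fun jj => ∑ t, if jj = J'' t then c t else 0 with hx
  have hxJ : ∀ t, x (J'' t) = c t := by
    intro t
    rw [hx]
    simp only [hJ''.eq_iff]
    simp [Finset.sum_ite_eq]
  set y : Fin n → ℝ := star V *ᵥ x with hy
  have hy0 : ∀ k : Fin r, y (σ (pos k)) = 0 := by
    intro k
    have h1 : y (σ (pos k)) = ∑ jj, (star V) (σ (pos k)) jj * x jj := rfl
    rw [h1, sum_mul_ind J'' _ c]
    have h2 : (W *ᵥ c) k = 0 := by rw [hker]; rfl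
    simpa [hW, Matrix.mulVec, dotProduct] using h2
  have hxV : x ᵥ* V = y := by
    funext jj
    simp only [hy, Matrix.vecMul, Matrix.mulVec, dotProduct, Matrix.star_apply,
      star_trivial]
    exact Finset.sum_congr rfl fun i _ => mul_comm _ _
  have hxx : x ⬝ᵥ x = ∑ t, (c t)^2 := by
    have h1 : x ⬝ᵥ x = ∑ t, x (J'' t) * c t := sum_mul_ind J'' x c
    rw [h1]
    exact Finset.sum_congr rfl fun t _ => by rw [hxJ t, sq]
  have hyy : y ⬝ᵥ y = x ⬝ᵥ x := by
    calc y ⬝ᵥ y = (x ᵥ* V) ⬝ᵥ y := by rw [hxV]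
      _ = x ⬝ᵥ (V *ᵥ y) := (Matrix.dotProduct_mulVec x V y).symm
      _ = x ⬝ᵥ ((V * star V) *ᵥ x) := by rw [hy, Matrix.mulVec_mulVec]
      _ = x ⬝ᵥ x := by rw [hVV, Matrix.one_mulVec]
  have hdiag : x ⬝ᵥ ((Aᴴ * A) *ᵥ x) = ∑ i0, μ i0 * (y i0)^2 := by
    have hspec : Aᴴ * A = V * Matrix.diagonal (RCLike.ofReal ∘ μ) * star V :=
      hH.spectral_theorem
    rw [hspec, ← Matrix.mulVec_mulVec, ← Matrix.mulVec_mulVec,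
      Matrix.dotProduct_mulVec, hxV, ← hy]
    simp only [dotProduct, Matrix.mulVec_diagonal, Function.comp_apply]
    exact Finset.sum_congr rfl fun i0 _ => by
      simp [RCLike.ofReal]; ring
  have hperidx : ∀ i0 : Fin n, μ i0 * (y i0)^2 ≤ lam * (y i0)^2 := by
    intro i0
    by_cases hbad : ∃ k : Fin r, i0 = σ (pos k)
    · obtain ⟨k, rfl⟩ := hbad
      rw [hy0 k]
      simp
    · have hq : σ.symm i0 ≤ p := by
        by_contra hgt
        push_neg at hgt
        set q := σ.symm i0 with hqdef
        have hql : (p : ℕ) < (q : ℕ) := hgt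
        have hqn : (q : ℕ) < n := q.isLt
        refine hbad ⟨⟨(q : ℕ) - ((p : ℕ) + 1), by omega⟩, ?_⟩
        have : pos ⟨(q : ℕ) - ((p : ℕ) + 1), by omega⟩ = q := by
          apply Fin.ext
          simp [hpos]
          omega
        rw [this, hqdef, Equiv.apply_symm_apply]
      have hmono : μ (σ (σ.symm i0)) ≤ μ (σ p) := Tuple.monotone_sort μ hq
      rw [Equiv.apply_symm_apply] at hmono
      exact mul_le_mul_of_nonneg_right hmono (sq_nonneg _)
  have hAx : ∀ i : Fin (r+1), (A.submatrix I'' J'' *ᵥ c) i = (A *ᵥ x) (I'' i) := by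
    intro i
    have h1 : (A *ᵥ x) (I'' i) = ∑ jj, A (I'' i) jj * x jj := rfl
    rw [h1, sum_mul_ind J'' _ c]
    rfl
  have hrows : ∑ i, ((A.submatrix I'' J'' *ᵥ c) i)^2 ≤ ∑ i0, ((A *ᵥ x) i0)^2 := by
    have h1 : ∑ i, ((A.submatrix I'' J'' *ᵥ c) i)^2
        = ∑ i0 ∈ Finset.univ.image I'', ((A *ᵥ x) i0)^2 := by
      rw [Finset.sum_image (fun a _ b _ h => hI'' h)]
      exact Finset.sum_congr rfl fun i _ => by rw [hAx i]
    rw [h1]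
    exact Finset.sum_le_sum_of_subset_of_nonneg (Finset.subset_univ _)
      (fun i _ _ => sq_nonneg _)
  have hquad : ∑ i0, ((A *ᵥ x) i0)^2 = x ⬝ᵥ ((Aᴴ * A) *ᵥ x) := by
    rw [← Matrix.mulVec_mulVec, Matrix.dotProduct_mulVec]
    have : x ᵥ* Aᴴ = A *ᵥ x := by
      funext i0
      simp only [Matrix.vecMul, Matrix.mulVec, dotProduct, Matrix.conjTranspose_apply,
        star_trivial]
      exact Finset.sum_congr rfl fun jj _ => mul_comm _ _
    rw [this]
    simp [dotProduct, sq]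
  calc ∑ i, ((A.submatrix I'' J'' *ᵥ c) i)^2 ≤ ∑ i0, ((A *ᵥ x) i0)^2 := hrows
    _ = x ⬝ᵥ ((Aᴴ * A) *ᵥ x) := hquad
    _ = ∑ i0, μ i0 * (y i0)^2 := hdiag
    _ ≤ ∑ i0, lam * (y i0)^2 := Finset.sum_le_sum fun i0 _ => hperidx i0
    _ = lam * (y ⬝ᵥ y) := by simp [Finset.mul_sum, dotProduct, sq]
    _ = lam * ∑ t, (c t)^2 := by rw [hyy, hxx]
    _ = (sval A ⟨r, hrn⟩)^2 * ∑ t, (c t)^2 := by rw [hsval]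

lemma snoc_inj {α : Type*} {r : ℕ} {f : Fin r → α} {x : α}
    (hf : Function.Injective f) (hx : x ∉ Set.range f) :
    Function.Injective (Fin.snoc f x : Fin (r+1) → α) := by
  intro a b hab
  induction a using Fin.lastCases with
  | last =>
    induction b using Fin.lastCases with
    | last => rfl
    | cast b =>
      rw [Fin.snoc_last, Fin.snoc_castSucc] at hab
      exact absurd ⟨b, hab.symm⟩ hx
  | cast a =>
    induction b using Fin.lastCases with
    | last =>
      rw [Fin.snoc_last, Fin.snoc_castSucc] at hab
      exact absurd ⟨a, hab⟩ hx
    | cast b =>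
      rw [Fin.snoc_castSucc, Fin.snoc_castSucc] at hab
      rw [hf hab]

lemma schur_det {m n r : ℕ}
    (A : Matrix (Fin m) (Fin n) ℝ) (I : Fin r → Fin m) (J : Fin r → Fin n)
    (hinv : IsUnit (A.submatrix I J)) (i : Fin m) (j : Fin n) :
    (A.submatrix (Fin.snoc I i) (Fin.snoc J j)).det
      = (A.submatrix I J).det *
        ((A - A.submatrix id J * (A.submatrix I J)⁻¹ * A.submatrix I id) i j) := by
  classical
  set U := A.submatrix I J with hU
  haveI : Invertible U := U.invertibleOfIsUnitDet ((Matrix.isUnit_iff_isUnit_det U).mp hinv)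
  set e : Fin r ⊕ Fin 1 ≃ Fin (r+1) := finSumFinEquiv with he
  have he1 : ∀ k : Fin r, (e (Sum.inl k) : Fin (r+1)) = Fin.castSucc k := fun k => rfl
  have he2 : ∀ z : Fin 1, (e (Sum.inr z) : Fin (r+1)) = Fin.last r := by
    intro z
    apply Fin.ext
    simp [he, Fin.last]
  set B := A.submatrix (Fin.snoc I i) (Fin.snoc J j) with hB
  have hblocks : B.submatrix e e = Matrix.fromBlocks U
      (Matrix.of fun (k : Fin r) (_ : Fin 1) => A (I k) j)
      (Matrix.of fun (_ : Fin 1) (l : Fin r) => A i (J l))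
      (Matrix.of fun (_ : Fin 1) (_ : Fin 1) => A i j) := by
    ext a b
    rcases a with k | z <;> rcases b with l | z'
    · simp [hB, Matrix.submatrix_apply, he1, Fin.snoc_castSucc, hU]
    · simp [hB, Matrix.submatrix_apply, he1, he2, Fin.snoc_castSucc, Fin.snoc_last]
    · simp [hB, Matrix.submatrix_apply, he1, he2, Fin.snoc_castSucc, Fin.snoc_last]
    · simp [hB, Matrix.submatrix_apply, he2, Fin.snoc_last]
  have hdet : B.det = (B.submatrix e e).det := (Matrix.det_submatrix_equiv_self e B).symm
  rw [hdet, hblocks, Matrix.det_fromBlocks₁₁]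
  congr 1
  rw [Matrix.det_fin_one, Matrix.invOf_eq_nonsing_inv]
  simp only [Matrix.sub_apply, Matrix.mul_apply, Matrix.of_apply, Matrix.submatrix_apply,
    id_eq]

theorem stmt14 {m n r : ℕ} (hrm : r < m) (hrn : r < n)
    (A : Matrix (Fin m) (Fin n) ℝ) (I : Fin r → Fin m) (J : Fin r → Fin n)
    (hI : Function.Injective I) (hJ : Function.Injective J)
    (hinv : IsUnit (A.submatrix I J))
    (Imax : Fin r → Fin m) (Jmax : Fin r → Fin n)
    (hImax : Function.Injective Imax) (hJmax : Function.Injective Jmax)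
    (hmax : ∀ (I' : Fin r → Fin m) (J' : Fin r → Fin n),
      Function.Injective I' → Function.Injective J' →
        |(A.submatrix I' J').det| ≤ |(A.submatrix Imax Jmax).det|)
    (ν : ℝ) (hν : ν ∈ Set.Ioo (0 : ℝ) 1)
    (hvol : (A.submatrix I J).det = ν * (A.submatrix Imax Jmax).det) :
    chebNorm (A - A.submatrix id J * (A.submatrix I J)⁻¹ * A.submatrix I id)
      ≤ (1 / ν) * (r + 1) * sval A ⟨r, hrn⟩ := by
  classical
  have hνpos : (0:ℝ) < ν := hν.1
  set U := A.submatrix I J with hU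
  set s := sval A ⟨r, hrn⟩ with hs
  have hs0 : 0 ≤ s := Real.sqrt_nonneg _
  set K := |(A.submatrix Imax Jmax).det| with hK
  have hK0 : 0 ≤ K := abs_nonneg _
  have hdetU : U.det ≠ 0 := ((Matrix.isUnit_iff_isUnit_det U).mp hinv).ne_zero
  have hKpos : 0 < K := by
    rcases lt_or_eq_of_le hK0 with h | h
    · exact h
    · exfalso
      apply hdetU
      have h0 : (A.submatrix Imax Jmax).det = 0 := abs_eq_zero.mp h.symm
      rw [hvol, h0, mul_zero]
  have hUabs : |U.det| = ν * K := by
    rw [hvol, abs_mul, abs_of_pos hνpos, hK]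
  have hentry : ∀ (i : Fin m) (j : Fin n),
      |(A - A.submatrix id J * U⁻¹ * A.submatrix I id) i j| ≤ 1 / ν * (r + 1) * s := by
    intro i j
    set B := A.submatrix (Fin.snoc I i) (Fin.snoc J j) with hB
    have hschur : B.det = U.det * ((A - A.submatrix id J * U⁻¹ * A.submatrix I id) i j) :=
      schur_det A I J hinv i j
    have hdetB : |B.det| ≤ (r+1) * K * s := by
      by_cases hi : i ∈ Set.range I
      · obtain ⟨k, hk⟩ := hi
        have hz : B.det = 0 := by
          apply Matrix.det_zero_of_row_eq (Fin.castSucc_lt_last k).ne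
          funext l
          simp [hB, Fin.snoc_castSucc, Fin.snoc_last, hk]
        rw [hz, abs_zero]; positivity
      · by_cases hj : j ∈ Set.range J
        · obtain ⟨k, hk⟩ := hj
          have hz : B.det = 0 := by
            apply Matrix.det_zero_of_column_eq (Fin.castSucc_lt_last k).ne
            intro k'
            simp [hB, Fin.snoc_castSucc, Fin.snoc_last, hk]
          rw [hz, abs_zero]; positivity
        · have hIinj := snoc_inj hI hi
          have hJinj := snoc_inj hJ hj
          apply det_le_of_vec B K s hK0 hs0
          · intro i' j'
            rw [abs_adjugate_eq, hB, Matrix.submatrix_submatrix]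
            exact hmax _ _ (hIinj.comp Fin.succAbove_right_injective)
              (hJinj.comp Fin.succAbove_right_injective)
          · exact exists_kernel_vec hrn A _ _ hIinj hJinj
    have hEeq : (A - A.submatrix id J * U⁻¹ * A.submatrix I id) i j = B.det / U.det := by
      rw [hschur]
      field_simp
    rw [hEeq, abs_div, hUabs, div_le_iff₀ (by positivity)]
    calc |B.det| ≤ (r+1) * K * s := hdetB
      _ = 1 / ν * (r + 1) * s * (ν * K) := by field_simp
  have hne1 : Nonempty (Fin m) := ⟨⟨0, lt_of_le_of_lt (Nat.zero_le r) hrm⟩⟩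
  have hne2 : Nonempty (Fin n) := ⟨⟨0, lt_of_le_of_lt (Nat.zero_le r) hrn⟩⟩
  rw [chebNorm]
  refine ciSup_le fun i => ciSup_le fun j => hentry i j
end

section
/- Assume σ_1(A) = 1 and let A_1 be the rank-1 cross approximation of A built from a maximal-volume 1×1 submatrix (a maximal-modulus entry). Then ‖A − A_1‖_C ≤ 2σ_2(A)/√(1 + σ_2(A)²). In particular, if σ_2(A) = 1/2, then ‖A − A_1‖_C ≤ 2√5/5. -/
open Matrix BigOperators Filter

theorem quad_decomp {n : ℕ} (M : Matrix (Fin n) (Fin n) ℝ) (hM : M.IsHermitian) (x : Fin n → ℝ) :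
    x ⬝ᵥ M *ᵥ x = ∑ k, hM.eigenvalues k * (((↑hM.eigenvectorUnitary : Matrix (Fin n) (Fin n) ℝ)ᵀ *ᵥ x) k)^2 ∧
    x ⬝ᵥ x = ∑ k, (((↑hM.eigenvectorUnitary : Matrix (Fin n) (Fin n) ℝ)ᵀ *ᵥ x) k)^2 := by
  set U : Matrix (Fin n) (Fin n) ℝ := ↑hM.eigenvectorUnitary with hU
  have hstar : star U = Uᵀ := rfl
  have hU2 : U * Uᵀ = 1 := by
    rw [← hstar]; exact Matrix.mem_unitaryGroup_iff.mp hM.eigenvectorUnitary.2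
  set y := Uᵀ *ᵥ x with hy
  have hspec : M = U * diagonal (RCLike.ofReal ∘ hM.eigenvalues) * star U := hM.spectral_theorem
  have e2 : ∀ w, x ⬝ᵥ (U *ᵥ w) = y ⬝ᵥ w := by
    intro w
    rw [dotProduct_mulVec, hy, ← vecMul_transpose Uᵀ x, transpose_transpose]
  constructor
  · conv_lhs => rw [hspec]
    rw [hstar, ← Matrix.mulVec_mulVec, ← Matrix.mulVec_mulVec, ← hy, e2]
    simp only [mulVec_diagonal, dotProduct, Function.comp, RCLike.ofReal_real_eq_id, id_eq]
    exact Finset.sum_congr rfl fun k _ => by ring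
  · calc x ⬝ᵥ x = x ⬝ᵥ ((U * Uᵀ) *ᵥ x) := by rw [hU2, one_mulVec]
    _ = y ⬝ᵥ y := by rw [← Matrix.mulVec_mulVec, e2, hy]
    _ = ∑ k, (y k)^2 := by simp [dotProduct, sq]

lemma sorted_top {n : ℕ} (hn : 1 < n) (μ : Fin n → ℝ) :
    (∀ k, μ k ≤ μ (Tuple.sort μ (Fin.rev ⟨0, by omega⟩))) ∧
    (∀ k, k ≠ Tuple.sort μ (Fin.rev ⟨0, by omega⟩) → μ k ≤ μ (Tuple.sort μ (Fin.rev ⟨1, hn⟩))) := by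
  have hm := Tuple.monotone_sort μ
  have hk : ∀ k : Fin n, μ k = (μ ∘ Tuple.sort μ) ((Tuple.sort μ).symm k) := by
    intro k; simp
  constructor
  · intro k
    rw [hk k]
    apply hm
    rw [Fin.le_def]
    have := ((Tuple.sort μ).symm k).isLt
    simp [Fin.val_rev]; omega
  · intro k hne
    rw [hk k]
    apply hm
    rw [Fin.le_def]
    have h1 := ((Tuple.sort μ).symm k).isLt
    have h2 : (Tuple.sort μ).symm k ≠ Fin.rev ⟨0, by omega⟩ := by
      intro h; apply hne; rw [← h]; simp
    rw [Fin.ne_iff_vne] at h2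
    simp [Fin.val_rev] at h2 ⊢
    omega

lemma specBounds {m n : ℕ} (hn : 1 < n) (A : Matrix (Fin m) (Fin n) ℝ) :
    (∀ x : Fin n → ℝ, (A *ᵥ x) ⬝ᵥ (A *ᵥ x) ≤ (sval A ⟨0, by omega⟩)^2 * (x ⬝ᵥ x)) ∧
    (∃ v : Fin n → ℝ, ∀ x, v ⬝ᵥ x = 0 → (A *ᵥ x) ⬝ᵥ (A *ᵥ x) ≤ (sval A ⟨1, hn⟩)^2 * (x ⬝ᵥ x)) := by
  have hM := Matrix.isHermitian_conjTranspose_mul_self A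
  set M := Aᴴ * A with hMdef
  have hAx : ∀ x : Fin n → ℝ, (A *ᵥ x) ⬝ᵥ (A *ᵥ x) = x ⬝ᵥ M *ᵥ x := by
    intro x
    rw [hMdef, ← Matrix.mulVec_mulVec, dotProduct_mulVec x,
      Matrix.conjTranspose_eq_transpose_of_trivial, vecMul_transpose]
  have hnn : ∀ k, 0 ≤ hM.eigenvalues k := Matrix.eigenvalues_conjTranspose_mul_self_nonneg A
  have hsq : ∀ k : Fin n, (sval A k)^2
      = hM.eigenvalues (Tuple.sort hM.eigenvalues (Fin.rev k)) := by
    intro k; exact Real.sq_sqrt (hnn _)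
  obtain ⟨htop, hsnd⟩ := sorted_top hn hM.eigenvalues
  constructor
  · intro x
    obtain ⟨hq, hx⟩ := quad_decomp M hM x
    rw [hAx, hq, hsq, hx, Finset.mul_sum]
    apply Finset.sum_le_sum
    intro k _
    exact mul_le_mul_of_nonneg_right (htop k) (sq_nonneg _)
  · set top := Tuple.sort hM.eigenvalues (Fin.rev (⟨0, by omega⟩ : Fin n)) with htopdef
    refine ⟨fun q => (↑hM.eigenvectorUnitary : Matrix (Fin n) (Fin n) ℝ) q top, fun x hvx => ?_⟩
    obtain ⟨hq, hx⟩ := quad_decomp M hM x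
    set U : Matrix (Fin n) (Fin n) ℝ := ↑hM.eigenvectorUnitary
    have hy0 : (Uᵀ *ᵥ x) top = 0 := by
      rw [← hvx]; simp [mulVec, dotProduct, transpose]
    rw [hAx, hq, hsq, hx, Finset.mul_sum]
    rw [← Finset.sum_erase_add _ _ (Finset.mem_univ top),
        ← Finset.sum_erase_add _ _ (Finset.mem_univ top)]
    have h02 : (0:ℝ)^2 = 0 := by norm_num
    rw [hy0, h02, mul_zero, mul_zero, add_zero, add_zero]
    apply Finset.sum_le_sum
    intro k hk
    have hkne : k ≠ top := Finset.ne_of_mem_erase hk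
    exact mul_le_mul_of_nonneg_right (hsnd k hkne) (sq_nonneg _)

lemma two_by_two (P Q R lam2 : ℝ) (hP : 0 ≤ P) (hQ : 0 ≤ Q) (hR : R^2 ≤ P*Q)
    (hlam : 0 ≤ lam2)
    (hupper : ∀ x₁ x₂ : ℝ, P*x₁^2 + 2*R*x₁*x₂ + Q*x₂^2 ≤ x₁^2 + x₂^2)
    (hlower : ∃ α β : ℝ, ∀ x₁ x₂ : ℝ, α*x₁+β*x₂ = 0 →
      P*x₁^2 + 2*R*x₁*x₂ + Q*x₂^2 ≤ lam2*(x₁^2+x₂^2)) :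
    ∃ S t : ℝ, 0 ≤ t ∧ t ≤ S ∧ S ≤ 1 ∧ t ≤ lam2 ∧ S + t = P + Q ∧ S * t = P*Q - R^2 := by
  set r := Real.sqrt ((P-Q)^2 + 4*R^2) with hrdef
  have hr0 : 0 ≤ r := Real.sqrt_nonneg _
  have hr2 : r^2 = (P-Q)^2 + 4*R^2 := Real.sq_sqrt (by positivity)
  have habs : |P - Q| ≤ r := by
    rw [← Real.sqrt_sq_eq_abs, hrdef]
    exact Real.sqrt_le_sqrt (by nlinarith [sq_nonneg R])
  have habs1 : P - Q ≤ r := le_trans (le_abs_self _) habs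
  have habs2 : Q - P ≤ r := le_trans (by rw [abs_sub_comm]; exact le_abs_self _) habs
  have hrF : r ≤ P + Q := by
    rw [hrdef, show P + Q = Real.sqrt ((P+Q)^2) by rw [Real.sqrt_sq (by linarith)]]
    exact Real.sqrt_le_sqrt (by nlinarith)
  refine ⟨(P+Q+r)/2, (P+Q-r)/2, by linarith, by linarith, ?_, ?_, by ring,
    by linear_combination (-1/4) * hr2⟩
  · -- S ≤ 1
    set S := (P+Q+r)/2 with hSdef
    have hcharS : (S - P)*(S - Q) = R^2 := by rw [hSdef]; linear_combination hr2/4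
    by_cases hR0 : R = 0
    · have hr' : r = |P - Q| := by
        rw [hrdef, hR0]; rw [show (P-Q)^2 + 4*0^2 = (P-Q)^2 by ring, Real.sqrt_sq_eq_abs]
      rcases abs_cases (P - Q) with ⟨h1, _⟩ | ⟨h1, _⟩
      · have h := hupper 1 0
        have : S = P := by rw [hSdef, hr', h1]; ring
        nlinarith
      · have h := hupper 0 1
        have : S = Q := by rw [hSdef, hr', h1]; ring
        nlinarith
    · have hx2 : 0 < R^2 + (S - P)^2 := by positivity
      have hquad : P*R^2 + 2*R*R*(S-P) + Q*(S-P)^2 = S*(R^2 + (S-P)^2) := by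
        linear_combination (P - S) * hcharS
      have h := hupper R (S - P)
      nlinarith
  · -- t ≤ lam2
    set t := (P+Q-r)/2 with htdef
    have ht0 : 0 ≤ t := by rw [htdef]; linarith
    have htP : t ≤ P := by rw [htdef]; linarith
    have htQ : t ≤ Q := by rw [htdef]; linarith
    have hchar : (P - t)*(Q - t) = R^2 := by rw [htdef]; linear_combination hr2/4
    have qf_lower : ∀ x₁ x₂ : ℝ, t*(x₁^2+x₂^2) ≤ P*x₁^2 + 2*R*x₁*x₂ + Q*x₂^2 := by
      intro x₁ x₂
      have hu2 : (Real.sqrt (P - t))^2 = P - t := Real.sq_sqrt (by linarith)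
      have hw2 : (Real.sqrt (Q - t))^2 = Q - t := Real.sq_sqrt (by linarith)
      have huw : (Real.sqrt (P - t) * Real.sqrt (Q - t)) = Real.sqrt (R^2) := by
        rw [← Real.sqrt_mul (by linarith), hchar]
      rcases le_or_gt 0 R with h | h
      · rw [Real.sqrt_sq h] at huw
        have expand : P*x₁^2 + 2*R*x₁*x₂ + Q*x₂^2 - t*(x₁^2+x₂^2)
            = (Real.sqrt (P-t)*x₁ + Real.sqrt (Q-t)*x₂)^2 := by
          linear_combination (-x₁^2)*hu2 + (-x₂^2)*hw2 + (-2*x₁*x₂)*huw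
        have hsq := sq_nonneg (Real.sqrt (P-t)*x₁ + Real.sqrt (Q-t)*x₂)
        linarith
      · rw [Real.sqrt_sq_eq_abs, abs_of_neg h] at huw
        have expand : P*x₁^2 + 2*R*x₁*x₂ + Q*x₂^2 - t*(x₁^2+x₂^2)
            = (Real.sqrt (P-t)*x₁ - Real.sqrt (Q-t)*x₂)^2 := by
          linear_combination (-x₁^2)*hu2 + (-x₂^2)*hw2 + (2*x₁*x₂)*huw
        have hsq := sq_nonneg (Real.sqrt (P-t)*x₁ - Real.sqrt (Q-t)*x₂)
        linarith
    obtain ⟨α, β, hlow⟩ := hlower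
    by_cases hab : α = 0 ∧ β = 0
    · have h1 := hlow 1 0 (by rw [hab.1]; ring)
      have h2 := qf_lower 1 0
      nlinarith
    · have hx2 : 0 < (-β)^2 + α^2 := by
        rcases not_and_or.mp hab with h | h
        · have h' : 0 < α^2 := by positivity
          nlinarith [sq_nonneg β]
        · have hb : -β ≠ 0 := neg_ne_zero.mpr h
          have h' : 0 < (-β)^2 := by positivity
          nlinarith [sq_nonneg α]
      have h1 := hlow (-β) α (by ring)
      have h2 := qf_lower (-β) α
      nlinarith

lemma cross_bound (a b c d lam2 : ℝ) (ha : a ≠ 0)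
    (hba : b^2 ≤ a^2) (hca : c^2 ≤ a^2) (hda : d^2 ≤ a^2) (hlam : 0 ≤ lam2)
    (hupper : ∀ x₁ x₂ : ℝ, (a*x₁ + b*x₂)^2 + (c*x₁ + d*x₂)^2 ≤ x₁^2 + x₂^2)
    (hlower : ∃ α β : ℝ, ∀ x₁ x₂ : ℝ, α*x₁ + β*x₂ = 0 →
      (a*x₁+b*x₂)^2 + (c*x₁+d*x₂)^2 ≤ lam2 * (x₁^2+x₂^2)) :
    (d - c * a⁻¹ * b)^2 ≤ 4 * lam2 / (1 + lam2) := by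
  obtain ⟨S, t, ht0, htS, hS1, htlam, hsum, hprod⟩ :=
    two_by_two (a^2+c^2) (b^2+d^2) (a*b+c*d) lam2 (by positivity) (by positivity)
      (by nlinarith [sq_nonneg (a*d - b*c)]) hlam
      (fun x₁ x₂ => by nlinarith [hupper x₁ x₂])
      (by
        obtain ⟨α, β, hl⟩ := hlower
        exact ⟨α, β, fun x₁ x₂ h => by nlinarith [hl x₁ x₂ h]⟩)
  have ha2 : 0 < a^2 := by positivity
  have h1l : 0 < 1 + lam2 := by linarith
  have hE : (d - c*a⁻¹*b)^2 = (S*t)/a^2 := by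
    rw [hprod]; field_simp; ring
  rw [hE, div_le_div_iff₀ ha2 h1l]
  have hS0 : 0 ≤ S := le_trans ht0 htS
  have hF : S + t ≤ 4*a^2 := by linarith [hsum, hba, hca, hda]
  nlinarith [mul_le_mul_of_nonneg_left htlam hS0,
    mul_le_mul_of_nonneg_right hS1 (mul_nonneg ht0 hlam),
    mul_le_mul_of_nonneg_left hF hlam]

lemma sum_two {n : ℕ} (f : Fin n → ℝ) {j q : Fin n} (hjq : j ≠ q) (x₁ x₂ : ℝ) :
    ∑ r, f r * (if r = j then x₁ else if r = q then x₂ else 0) = f j * x₁ + f q * x₂ := by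
  have hcong : ∀ r ∈ Finset.univ, f r * (if r = j then x₁ else if r = q then x₂ else 0)
      = (if r = j then f j * x₁ else 0) + (if r = q then f q * x₂ else 0) := by
    intro r _
    by_cases h1 : r = j
    · subst h1; simp [hjq]
    · by_cases h2 : r = q
      · subst h2; simp [h1]
      · simp [h1, h2]
  rw [Finset.sum_congr rfl hcong, Finset.sum_add_distrib, Finset.sum_ite_eq',
    Finset.sum_ite_eq']
  simp

theorem stmt15 {m n : ℕ} (hm : 1 < m) (hn : 1 < n)
    (A : Matrix (Fin m) (Fin n) ℝ)
    (hσ1 : sval A ⟨0, by omega⟩ = 1)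
    (i : Fin m) (j : Fin n) (hmax : ∀ (p : Fin m) (q : Fin n), |A p q| ≤ |A i j|) :
    chebNorm (A - Matrix.of fun p q => A p j * (A i j)⁻¹ * A i q)
        ≤ 2 * sval A ⟨1, hn⟩ / Real.sqrt (1 + sval A ⟨1, hn⟩ ^ 2) ∧
      (sval A ⟨1, hn⟩ = 1 / 2 →
        chebNorm (A - Matrix.of fun p q => A p j * (A i j)⁻¹ * A i q)
          ≤ 2 * Real.sqrt 5 / 5) := by
  have hs0 : 0 ≤ sval A ⟨1, hn⟩ := Real.sqrt_nonneg _
  have hden : (0:ℝ) < Real.sqrt (1 + sval A ⟨1, hn⟩ ^ 2) :=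
    Real.sqrt_pos.mpr (by positivity)
  have hRHS0 : 0 ≤ 2 * sval A ⟨1, hn⟩ / Real.sqrt (1 + sval A ⟨1, hn⟩ ^ 2) := by positivity
  obtain ⟨L1, v, L2⟩ := specBounds hn A
  have hL1 : ∀ x : Fin n → ℝ, (A *ᵥ x) ⬝ᵥ (A *ᵥ x) ≤ x ⬝ᵥ x := by
    intro x
    have h := L1 x
    rwa [show sval A ⟨0, by omega⟩ = 1 from hσ1, one_pow, one_mul] at h
  -- A i j ≠ 0
  have haij : A i j ≠ 0 := by
    intro h0
    have hA0 : A = 0 := by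
      ext p q
      have h := hmax p q
      rw [h0, abs_zero] at h
      simpa using abs_nonpos_iff.mp h
    subst hA0
    have hμ1 : (Matrix.isHermitian_conjTranspose_mul_self (0:Matrix (Fin m) (Fin n) ℝ)).eigenvalues
        (Tuple.sort (Matrix.isHermitian_conjTranspose_mul_self
          (0:Matrix (Fin m) (Fin n) ℝ)).eigenvalues
          (Fin.rev (⟨0, by omega⟩ : Fin n))) = 1 := Real.sqrt_eq_one.mp hσ1
    set hM := Matrix.isHermitian_conjTranspose_mul_self (0:Matrix (Fin m) (Fin n) ℝ) with hMdef
    set top := Tuple.sort hM.eigenvalues (Fin.rev (⟨0, by omega⟩ : Fin n)) with htop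
    have hz : ∀ w : Fin n → ℝ,
        ((0:Matrix (Fin m) (Fin n) ℝ)ᴴ * (0:Matrix (Fin m) (Fin n) ℝ)) *ᵥ w = 0 := by
      intro w; simp
    have hbas := hM.mulVec_eigenvectorBasis top
    rw [hμ1, one_smul, hz] at hbas
    have hb0 : hM.eigenvectorBasis top = 0 := by
      apply (WithLp.equiv 2 _).injective
      exact hbas.symm
    exact hM.eigenvectorBasis.orthonormal.ne_zero top hb0
  have key : ∀ p q, |(A - Matrix.of fun p q => A p j * (A i j)⁻¹ * A i q) p q|
      ≤ 2 * sval A ⟨1, hn⟩ / Real.sqrt (1 + sval A ⟨1, hn⟩ ^ 2) := by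
    intro p q
    rw [Matrix.sub_apply, Matrix.of_apply]
    by_cases hp : p = i
    · subst hp
      rw [show A p q - A p j * (A p j)⁻¹ * A p q = 0 by field_simp; ring, abs_zero]
      exact hRHS0
    by_cases hq : q = j
    · subst hq
      rw [show A p q - A p q * (A i q)⁻¹ * A i q = 0 by field_simp; ring, abs_zero]
      exact hRHS0
    -- main case
    have hemb : ∀ x₁ x₂ : ℝ, ∀ r : Fin m,
        (A *ᵥ (fun r' => if r' = j then x₁ else if r' = q then x₂ else 0)) r
          = A r j * x₁ + A r q * x₂ := by
      intro x₁ x₂ r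
      simp only [Matrix.mulVec, dotProduct]
      exact sum_two (A r) (Ne.symm hq) x₁ x₂
    have hnorm : ∀ x₁ x₂ : ℝ,
        (fun r' => if r' = j then x₁ else if r' = q then x₂ else 0) ⬝ᵥ
          (fun r' => if r' = j then x₁ else if r' = q then x₂ else 0) = x₁^2 + x₂^2 := by
      intro x₁ x₂
      simp only [dotProduct]
      rw [sum_two _ (Ne.symm hq) x₁ x₂]
      simp [Ne.symm hq, hq, sq]
    have hquadle : ∀ x₁ x₂ : ℝ, (A i j * x₁ + A i q * x₂)^2 + (A p j * x₁ + A p q * x₂)^2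
        ≤ (A *ᵥ (fun r' => if r' = j then x₁ else if r' = q then x₂ else 0)) ⬝ᵥ
          (A *ᵥ (fun r' => if r' = j then x₁ else if r' = q then x₂ else 0)) := by
      intro x₁ x₂
      set g := A *ᵥ (fun r' => if r' = j then x₁ else if r' = q then x₂ else 0) with hg
      have h1 : (A i j * x₁ + A i q * x₂)^2 + (A p j * x₁ + A p q * x₂)^2
          = ∑ r ∈ ({i, p} : Finset (Fin m)), (g r)^2 := by
        rw [Finset.sum_pair (Ne.symm hp)]
        rw [hg, hemb x₁ x₂ i, hemb x₁ x₂ p]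
      rw [h1]
      have h2 : g ⬝ᵥ g = ∑ r, (g r)^2 := by simp [dotProduct, sq]
      rw [h2]
      exact Finset.sum_le_sum_of_subset_of_nonneg (Finset.subset_univ _)
        (fun _ _ _ => sq_nonneg _)
    have hcb := cross_bound (A i j) (A i q) (A p j) (A p q) (sval A ⟨1, hn⟩ ^ 2) haij
      (by
        have h := pow_le_pow_left₀ (abs_nonneg _) (hmax i q) 2
        rwa [sq_abs, sq_abs] at h)
      (by
        have h := pow_le_pow_left₀ (abs_nonneg _) (hmax p j) 2
        rwa [sq_abs, sq_abs] at h)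
      (by
        have h := pow_le_pow_left₀ (abs_nonneg _) (hmax p q) 2
        rwa [sq_abs, sq_abs] at h)
      (by positivity)
      (by
        intro x₁ x₂
        have h := hL1 (fun r' => if r' = j then x₁ else if r' = q then x₂ else 0)
        rw [hnorm x₁ x₂] at h
        exact le_trans (hquadle x₁ x₂) h)
      (by
        refine ⟨v j, v q, fun x₁ x₂ horth => ?_⟩
        have hvx : v ⬝ᵥ (fun r' => if r' = j then x₁ else if r' = q then x₂ else 0) = 0 := by
          simp only [dotProduct]
          rw [sum_two v (Ne.symm hq) x₁ x₂]
          exact horth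
        have h := L2 _ hvx
        rw [hnorm x₁ x₂] at h
        exact le_trans (hquadle x₁ x₂) h)
    -- conclude from square inequality
    have hrhs_sq : (2 * sval A ⟨1, hn⟩ / Real.sqrt (1 + sval A ⟨1, hn⟩ ^ 2))^2
        = 4 * sval A ⟨1, hn⟩ ^ 2 / (1 + sval A ⟨1, hn⟩ ^ 2) := by
      rw [div_pow, Real.sq_sqrt (by positivity)]
      ring_nf
    calc |A p q - A p j * (A i j)⁻¹ * A i q|
        = Real.sqrt ((A p q - A p j * (A i j)⁻¹ * A i q)^2) := (Real.sqrt_sq_eq_abs _).symm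
      _ ≤ Real.sqrt ((2 * sval A ⟨1, hn⟩ / Real.sqrt (1 + sval A ⟨1, hn⟩ ^ 2))^2) := by
          apply Real.sqrt_le_sqrt
          rw [hrhs_sq]
          exact hcb
      _ = 2 * sval A ⟨1, hn⟩ / Real.sqrt (1 + sval A ⟨1, hn⟩ ^ 2) := Real.sqrt_sq hRHS0
  haveI : Nonempty (Fin m) := ⟨i⟩
  haveI : Nonempty (Fin n) := ⟨j⟩
  have part1 : chebNorm (A - Matrix.of fun p q => A p j * (A i j)⁻¹ * A i q)
      ≤ 2 * sval A ⟨1, hn⟩ / Real.sqrt (1 + sval A ⟨1, hn⟩ ^ 2) :=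
    ciSup_le fun p => ciSup_le fun q => key p q
  refine ⟨part1, fun hhalf => ?_⟩
  refine le_trans part1 ?_
  rw [hhalf]
  have h54 : (1:ℝ) + ((1:ℝ)/2)^2 = 5/4 := by norm_num
  rw [h54]
  have hd54 : (0:ℝ) < Real.sqrt (5/4) := Real.sqrt_pos.mpr (by norm_num)
  rw [div_le_div_iff₀ hd54 (by norm_num : (0:ℝ) < 5)]
  have h2 : Real.sqrt 5 * Real.sqrt (5/4) = 5/2 := by
    rw [← Real.sqrt_mul (by norm_num), show (5:ℝ)*(5/4) = (5/2)^2 by norm_num,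
      Real.sqrt_sq (by norm_num)]
  nlinarith [h2]
end
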